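/- arXiv:1702.04549 — 2 statements merged into one kernel-verified Lean document; each statement's English description precedes it below -/
import Mathlib

section
/- For all ν > -1, the inequality ((ν+1)²(ν+2)/(56ν+137))^(1/4) ≤ √((ν+1)(ν+3)(56ν+137)/(2(208ν²+1172ν+1693))) holds. -/
theorem bessel_convexity_bounds_g2 (ν : ℝ) (hν : -1 < ν) :
    ((ν + 1) ^ 2 * (ν + 2) / (56 * ν + 137)) ^ ((1 : ℝ) / 4) ≤
      Real.sqrt ((ν + 1) * (ν + 3) * (56 * ν + 137) / (2 * (208 * ν ^ 2 + 1172 * ν + 1693))) := by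
  have h1 : (0:ℝ) < ν + 1 := by linarith
  have hd1 : (0:ℝ) < 56 * ν + 137 := by linarith
  have hd2 : (0:ℝ) < 208 * ν ^ 2 + 1172 * ν + 1693 := by nlinarith [sq_nonneg (ν+1), sq_nonneg ν]
  set A := (ν + 1) ^ 2 * (ν + 2) / (56 * ν + 137) with hA
  set B := (ν + 1) * (ν + 3) * (56 * ν + 137) / (2 * (208 * ν ^ 2 + 1172 * ν + 1693)) with hB
  have hApos : 0 ≤ A := by
    apply div_nonneg _ hd1.le
    nlinarith [sq_nonneg (ν+1)]
  have hBpos : 0 ≤ B := by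
    apply div_nonneg _ (by positivity)
    nlinarith [sq_nonneg (ν+1)]
  have key : A ≤ B ^ 2 := by
    rw [hA, hB, div_pow, div_le_div_iff₀ hd1 (by positivity)]
    nlinarith [pow_pos h1 4, sq_nonneg (ν+1), mul_pos (mul_pos h1 h1) (mul_pos h1 h1),
      mul_pos (pow_pos h1 4) h1, mul_pos (mul_pos (pow_pos h1 4) h1) h1,
      mul_pos (mul_pos (mul_pos (pow_pos h1 4) h1) h1) h1]
  calc A ^ ((1:ℝ)/4) ≤ (B ^ 2) ^ ((1:ℝ)/4) :=
        Real.rpow_le_rpow hApos key (by norm_num)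
    _ = B ^ ((1:ℝ)/2) := by
        rw [← Real.rpow_natCast B 2, ← Real.rpow_mul hBpos]
        norm_num
    _ = Real.sqrt B := (Real.sqrt_eq_rpow B).symm
end

section
/- For all ν > -1, the inequality √((ν+1)²(ν+2)/(7ν+23)) ≤ (ν+1)(ν+3)(7ν+23)/(2(9ν²+60ν+115)) holds. -/
theorem bessel_convexity_bounds_h4 (ν : ℝ) (hν : -1 < ν) :
    Real.sqrt ((ν + 1) ^ 2 * (ν + 2) / (7 * ν + 23)) ≤
      (ν + 1) * (ν + 3) * (7 * ν + 23) / (2 * (9 * ν ^ 2 + 60 * ν + 115)) := by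
  have h1 : (0:ℝ) < ν + 1 := by linarith
  have h7 : (0:ℝ) < 7 * ν + 23 := by linarith
  have h9 : (0:ℝ) < 9 * ν ^ 2 + 60 * ν + 115 := by nlinarith [sq_nonneg (3*ν+10)]
  have hB : (0:ℝ) ≤ (ν + 1) * (ν + 3) * (7 * ν + 23) / (2 * (9 * ν ^ 2 + 60 * ν + 115)) := by
    apply div_nonneg (by nlinarith) (by positivity)
  rw [show ((ν + 1) * (ν + 3) * (7 * ν + 23) / (2 * (9 * ν ^ 2 + 60 * ν + 115))) =
      Real.sqrt (((ν + 1) * (ν + 3) * (7 * ν + 23) / (2 * (9 * ν ^ 2 + 60 * ν + 115))) ^ 2)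
    from (Real.sqrt_sq hB).symm]
  apply Real.sqrt_le_sqrt
  rw [div_pow, div_le_div_iff₀ h7 (by positivity)]
  have key : (ν + 2) * (4 * (9 * ν ^ 2 + 60 * ν + 115) ^ 2) ≤
      (ν + 3) ^ 2 * (7 * ν + 23) ^ 3 := by
    nlinarith [sq_nonneg ν, sq_nonneg (ν+1), sq_nonneg (ν*ν), pow_pos h1 3, sq_nonneg (ν+2), sq_nonneg (ν*(ν+1))]
  nlinarith [mul_le_mul_of_nonneg_left key (sq_nonneg (ν+1)), sq_nonneg (ν+1)]
end
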